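/- Let (e_k) be a 1-spreading Schauder basic sequence and (z_k) an absolutely convex block sequence of (e_k). Then for every ε > 0, (z_k) has a subsequence which is (1+ε)-dominated by (e_k): ‖Σ a_k z_{k_j}‖ ≤ (1+ε)‖Σ a_j e_j‖ for all finitely supported scalar sequences (a_j). -/

import Mathlib

variable {X : Type*} [NormedAddCommGroup X] [NormedSpace ℝ X]

/-- `(e_k)` is a Schauder basic sequence. -/
def IsBasicSeq (e : ℕ → X) : Prop :=
  (∀ k, e k ≠ 0) ∧ ∃ C : ℝ, 1 ≤ C ∧ ∀ (m n : ℕ), m ≤ n → ∀ a : ℕ → ℝ,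
    ‖∑ i ∈ Finset.range m, a i • e i‖ ≤ C * ‖∑ i ∈ Finset.range n, a i • e i‖

/-- `(e_k)` is 1-spreading. -/
def OneSpreading (e : ℕ → X) : Prop :=
  ∀ (n : ℕ) (p : ℕ → ℕ), StrictMono p → ∀ a : ℕ → ℝ,
    ‖∑ k ∈ Finset.range n, a k • e (p k)‖ = ‖∑ k ∈ Finset.range n, a k • e k‖

/-- `(z_k)` is an absolutely convex block sequence of `(e_k)`:
`z_k = ∑_{i ∈ F_k} c_i e_i` with `F_1 < F_2 < ⋯` successive finite sets and
`∑_{i ∈ F_k} |c_i| = 1`. -/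
def IsAbsConvexBlockSeq (e z : ℕ → X) : Prop :=
  ∃ (F : ℕ → Finset ℕ) (c : ℕ → ℝ),
    (∀ k, (F k).Nonempty) ∧
    (∀ k l, k < l → ∀ a ∈ F k, ∀ b ∈ F l, a < b) ∧
    (∀ k, ∑ i ∈ F k, |c i| = 1) ∧
    (∀ k, z k = ∑ i ∈ F k, c i • e i)

lemma norm_e_eq (e : ℕ → X) (he : OneSpreading e) (i : ℕ) : ‖e i‖ = ‖e 0‖ := by
  have hm : StrictMono (fun k => i + k) := fun a b h => by simpa using h
  have := he 1 (fun k => i + k) hm (fun _ => 1)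
  simpa using this

lemma spread_select (e : ℕ → X) (he : OneSpreading e) (n : ℕ) (q : ℕ → ℕ)
    (hq : ∀ j, j + 1 < n → q j < q (j + 1)) (a : ℕ → ℝ) :
    ‖∑ j ∈ Finset.range n, a j • e (q j)‖ = ‖∑ j ∈ Finset.range n, a j • e j‖ := by
  rcases Nat.eq_zero_or_pos n with rfl | hn
  · simp
  set p : ℕ → ℕ := fun j => if j < n then q j else q (n - 1) + (j - (n - 1)) with hp_def
  have hp : StrictMono p := by
    apply strictMono_nat_of_lt_succ
    intro j
    by_cases h1 : j + 1 < n
    · have h2 : j < n := by omega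
      simp only [hp_def, h1, h2, if_true]
      exact hq j h1
    · by_cases h2 : j < n
      · have hj : j = n - 1 := by omega
        subst hj
        simp only [hp_def, h1, h2, if_true, if_false]
        omega
      · have h1' : ¬ j < n := h2
        simp only [hp_def, h1, h2, if_false]
        omega
  have := he n p hp a
  rw [← this]
  apply congrArg
  apply Finset.sum_congr rfl
  intro j hj
  simp [hp_def, Finset.mem_range.mp hj]

lemma convex_block_dominated (e : ℕ → X) (he : OneSpreading e)
    (G : ℕ → Finset ℕ) (hne : ∀ j, (G j).Nonempty)
    (hord : ∀ k l, k < l → ∀ a ∈ G k, ∀ b ∈ G l, a < b)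
    (b : ℕ → ℕ → ℝ) (hb0 : ∀ j i, 0 ≤ b j i) (hb1 : ∀ j, ∑ i ∈ G j, b j i = 1)
    (n : ℕ) (a : ℕ → ℝ) :
    ‖∑ j ∈ Finset.range n, a j • ∑ i ∈ G j, b j i • e i‖ ≤
      ‖∑ j ∈ Finset.range n, a j • e j‖ := by
  have claim : ∀ m, m ≤ n → ∀ q : ℕ → ℕ, (∀ j, j < n → q j ∈ G j) →
      ‖∑ j ∈ Finset.range m, a j • ∑ i ∈ G j, b j i • e i
        + ∑ j ∈ Finset.Ico m n, a j • e (q j)‖ ≤ ‖∑ j ∈ Finset.range n, a j • e j‖ := by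
    intro m
    induction m with
    | zero =>
      intro _ q hq
      rw [Finset.range_zero, Finset.sum_empty, zero_add]
      rw [show Finset.Ico 0 n = Finset.range n from (Finset.range_eq_Ico n).symm]
      have := spread_select e he n q
        (fun j hj => hord j (j+1) (by omega) _ (hq j (by omega)) _ (hq (j+1) hj)) a
      exact le_of_eq this
    | succ m ih =>
      intro hm q hq
      have hmn : m < n := hm
      have key : ∑ j ∈ Finset.range (m+1), a j • ∑ i ∈ G j, b j i • e i
          + ∑ j ∈ Finset.Ico (m+1) n, a j • e (q j)
          = ∑ i ∈ G m, b m i •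
            (∑ j ∈ Finset.range m, a j • ∑ i ∈ G j, b j i • e i
              + (a m • e i + ∑ j ∈ Finset.Ico (m+1) n, a j • e (q j))) := by
        rw [Finset.sum_range_succ]
        simp only [smul_add]
        rw [Finset.sum_add_distrib, Finset.sum_add_distrib,
          ← Finset.sum_smul, hb1 m, one_smul, ← Finset.sum_smul, hb1 m, one_smul]
        have hmid : ∑ i ∈ G m, b m i • (a m • e i)
            = a m • ∑ i ∈ G m, b m i • e i := by
          rw [Finset.smul_sum]
          exact Finset.sum_congr rfl (fun i _ => smul_comm _ _ _)
        rw [hmid]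
        abel
      rw [key]
      calc ‖∑ i ∈ G m, b m i • (∑ j ∈ Finset.range m, a j • ∑ i ∈ G j, b j i • e i
              + (a m • e i + ∑ j ∈ Finset.Ico (m+1) n, a j • e (q j)))‖
          ≤ ∑ i ∈ G m, ‖b m i • (∑ j ∈ Finset.range m, a j • ∑ i ∈ G j, b j i • e i
              + (a m • e i + ∑ j ∈ Finset.Ico (m+1) n, a j • e (q j)))‖ :=
            norm_sum_le _ _
        _ ≤ ∑ i ∈ G m, b m i * ‖∑ j ∈ Finset.range n, a j • e j‖ := by
            apply Finset.sum_le_sum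
            intro i hi
            rw [norm_smul, Real.norm_eq_abs, abs_of_nonneg (hb0 m i)]
            apply mul_le_mul_of_nonneg_left _ (hb0 m i)
            have := ih (le_of_lt hmn) (Function.update q m i) (by
              intro j hj
              by_cases hjm : j = m
              · subst hjm; simpa using hi
              · rw [Function.update_of_ne hjm]; exact hq j hj)
            have hsplit : ∑ j ∈ Finset.Ico m n, a j • e (Function.update q m i j)
                = a m • e i + ∑ j ∈ Finset.Ico (m+1) n, a j • e (q j) := by
              rw [Finset.sum_eq_sum_Ico_succ_bot hmn]
              congr 1
              · rw [Function.update_self]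
              · apply Finset.sum_congr rfl
                intro j hj
                rw [Function.update_of_ne (by have := (Finset.mem_Ico.mp hj).1; omega)]
            rw [hsplit] at this
            exact this
        _ = ‖∑ j ∈ Finset.range n, a j • e j‖ := by
            rw [← Finset.sum_mul, hb1 m, one_mul]
  have := claim n le_rfl (fun j => (hne j).choose) (fun j _ => (hne j).choose_spec)
  simpa using this

/-- An absolutely convex block sequence of a 1-spreading Schauder basic
sequence has, for every `ε > 0`, a subsequence which is `(1+ε)`-dominated by
the original sequence. -/
theorem absConvexBlock_subseq_dominated (e z : ℕ → X)
    (hbasic : IsBasicSeq e) (he : OneSpreading e)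
    (hz : IsAbsConvexBlockSeq e z) (ε : ℝ) (hε : 0 < ε) :
    ∃ φ : ℕ → ℕ, StrictMono φ ∧ ∀ (n : ℕ) (a : ℕ → ℝ),
      ‖∑ j ∈ Finset.range n, a j • z (φ j)‖ ≤
        (1 + ε) * ‖∑ j ∈ Finset.range n, a j • e j‖ := by
  obtain ⟨F, c, hne, hord, hsum, hzk⟩ := hz
  obtain ⟨hnz, C, hC1, hC⟩ := hbasic
  have hCpos : 0 < C := lt_of_lt_of_le one_pos hC1
  set M : ℝ := ‖e 0‖ with hM_def
  have hM : 0 < M := norm_pos_iff.mpr (hnz 0)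
  set lp : ℕ → ℝ := fun k => ∑ i ∈ F k, max (c i) 0 with hlp_def
  have hlp_mem : ∀ k, lp k ∈ Set.Icc (0:ℝ) 1 := by
    intro k
    constructor
    · exact Finset.sum_nonneg fun i _ => le_max_right _ _
    · rw [← hsum k]
      exact Finset.sum_le_sum fun i _ => max_le (le_abs_self _) (abs_nonneg _)
  obtain ⟨lam, hlam, φ₀, hφ₀, hconv⟩ := isCompact_Icc.tendsto_subseq hlp_mem
  set ε' : ℝ := ε / (8 * C) with hε'_def
  have hε'pos : 0 < ε' := div_pos hε (by positivity)
  have hev : ∀ j : ℕ, ∀ᶠ k in Filter.atTop, |lp (φ₀ k) - lam| ≤ ε' * (1/2)^j := by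
    intro j
    have := Metric.tendsto_atTop.mp hconv (ε' * (1/2)^j) (by positivity)
    obtain ⟨N, hN⟩ := this
    rw [Filter.eventually_atTop]
    exact ⟨N, fun k hk => le_of_lt (by simpa [Real.dist_eq] using hN k hk)⟩
  obtain ⟨ψ, hψ, hcl⟩ := Filter.extraction_forall_of_eventually hev
  refine ⟨φ₀ ∘ ψ, hφ₀.comp hψ, ?_⟩
  set φ : ℕ → ℕ := φ₀ ∘ ψ with hφ_def
  have hφ : StrictMono φ := hφ₀.comp hψ
  -- coefficients for positive / negative normalized parts
  set bu : ℕ → ℕ → ℝ := fun j i => if lp (φ j) = 0 then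
      (if i = (F (φ j)).min' (hne _) then 1 else 0) else (lp (φ j))⁻¹ * max (c i) 0
    with hbu_def
  set bv : ℕ → ℕ → ℝ := fun j i => if 1 - lp (φ j) = 0 then
      (if i = (F (φ j)).min' (hne _) then 1 else 0)
      else (1 - lp (φ j))⁻¹ * max (-(c i)) 0 with hbv_def
  have hlp0 : ∀ k, 0 ≤ lp k := fun k => (hlp_mem k).1
  have hlp1 : ∀ k, lp k ≤ 1 := fun k => (hlp_mem k).2
  have hbu0 : ∀ j i, 0 ≤ bu j i := by
    intro j i
    simp only [hbu_def]
    split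
    · split <;> norm_num
    · exact mul_nonneg (inv_nonneg.mpr (hlp0 _)) (le_max_right _ _)
  have hbv0 : ∀ j i, 0 ≤ bv j i := by
    intro j i
    simp only [hbv_def]
    split
    · split <;> norm_num
    · exact mul_nonneg (inv_nonneg.mpr (by have := hlp1 (φ j); linarith)) (le_max_right _ _)
  -- sum of negative parts
  have hsumneg : ∀ k, ∑ i ∈ F k, max (-(c i)) 0 = 1 - lp k := by
    intro k
    have : ∑ i ∈ F k, (|c i| - max (c i) 0) = 1 - lp k := by
      rw [Finset.sum_sub_distrib, hsum k, hlp_def]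
    rw [← this]
    apply Finset.sum_congr rfl
    intro i _
    rcases le_total 0 (c i) with h | h
    · rw [abs_of_nonneg h, max_eq_left h, max_eq_right (neg_nonpos.mpr h)]
      ring
    · rw [abs_of_nonpos h, max_eq_right h, max_eq_left (neg_nonneg.mpr h)]
      ring
  have hbu1 : ∀ j, ∑ i ∈ F (φ j), bu j i = 1 := by
    intro j
    simp only [hbu_def]
    split
    · rw [Finset.sum_ite_eq' (F (φ j)) ((F (φ j)).min' (hne _))]
      simp [Finset.min'_mem]
    · rw [← Finset.mul_sum]
      exact inv_mul_cancel₀ (by assumption)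
  have hbv1 : ∀ j, ∑ i ∈ F (φ j), bv j i = 1 := by
    intro j
    simp only [hbv_def]
    split
    · rw [Finset.sum_ite_eq' (F (φ j)) ((F (φ j)).min' (hne _))]
      simp [Finset.min'_mem]
    · rw [← Finset.mul_sum, hsumneg]
      exact inv_mul_cancel₀ (by assumption)
  set u : ℕ → X := fun j => ∑ i ∈ F (φ j), bu j i • e i with hu_def
  set v : ℕ → X := fun j => ∑ i ∈ F (φ j), bv j i • e i with hv_def
  -- decomposition of z
  have hupart : ∀ j, lp (φ j) • u j = ∑ i ∈ F (φ j), max (c i) 0 • e i := by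
    intro j
    by_cases h : lp (φ j) = 0
    · rw [h, zero_smul]
      symm
      apply Finset.sum_eq_zero
      intro i hi
      have h0 : max (c i) 0 = 0 := by
        have hnonneg : ∀ x ∈ F (φ j), (0:ℝ) ≤ max (c x) 0 := fun x _ => le_max_right _ _
        have := (Finset.sum_eq_zero_iff_of_nonneg hnonneg).mp h i hi
        exact this
      rw [h0, zero_smul]
    · rw [hu_def, Finset.smul_sum]
      apply Finset.sum_congr rfl
      intro i _
      rw [hbu_def]
      simp only [h, if_false]
      rw [smul_smul, ← mul_assoc, mul_inv_cancel₀ h, one_mul]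
  have hvpart : ∀ j, (1 - lp (φ j)) • v j = ∑ i ∈ F (φ j), max (-(c i)) 0 • e i := by
    intro j
    by_cases h : 1 - lp (φ j) = 0
    · rw [h, zero_smul]
      symm
      apply Finset.sum_eq_zero
      intro i hi
      have h0 : max (-(c i)) 0 = 0 := by
        have hnonneg : ∀ x ∈ F (φ j), (0:ℝ) ≤ max (-(c x)) 0 := fun x _ => le_max_right _ _
        have hz0 : ∑ i ∈ F (φ j), max (-(c i)) 0 = 0 := by rw [hsumneg, h]
        exact (Finset.sum_eq_zero_iff_of_nonneg hnonneg).mp hz0 i hi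
      rw [h0, zero_smul]
    · rw [hv_def, Finset.smul_sum]
      apply Finset.sum_congr rfl
      intro i _
      rw [hbv_def]
      simp only [h, if_false]
      rw [smul_smul, ← mul_assoc, mul_inv_cancel₀ h, one_mul]
  have hzdec : ∀ j, z (φ j) = lp (φ j) • u j - (1 - lp (φ j)) • v j := by
    intro j
    rw [hupart, hvpart, hzk, ← Finset.sum_sub_distrib]
    apply Finset.sum_congr rfl
    intro i _
    rw [← sub_smul]
    congr 1
    rcases le_total 0 (c i) with h | h
    · rw [max_eq_left h, max_eq_right (neg_nonpos.mpr h)]; ring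
    · rw [max_eq_right h, max_eq_left (neg_nonneg.mpr h)]; ring
  -- norm bounds on u, v
  have hnorm_conv : ∀ (b : ℕ → ℕ → ℝ), (∀ j i, 0 ≤ b j i) →
      (∀ j, ∑ i ∈ F (φ j), b j i = 1) →
      ∀ j, ‖∑ i ∈ F (φ j), b j i • e i‖ ≤ M := by
    intro b hb0 hb1 j
    calc ‖∑ i ∈ F (φ j), b j i • e i‖ ≤ ∑ i ∈ F (φ j), ‖b j i • e i‖ := norm_sum_le _ _
      _ = ∑ i ∈ F (φ j), b j i * M := by
          apply Finset.sum_congr rfl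
          intro i _
          rw [norm_smul, Real.norm_eq_abs, abs_of_nonneg (hb0 j i), norm_e_eq e he i]
      _ = M := by rw [← Finset.sum_mul, hb1 j, one_mul]
  have hu_norm : ∀ j, ‖u j‖ ≤ M := hnorm_conv bu hbu0 hbu1
  have hv_norm : ∀ j, ‖v j‖ ≤ M := hnorm_conv bv hbv0 hbv1
  have hord' : ∀ k l, k < l → ∀ a ∈ F (φ k), ∀ b ∈ F (φ l), a < b :=
    fun k l hkl => hord (φ k) (φ l) (hφ hkl)
  have hUdom : ∀ (n : ℕ) (a : ℕ → ℝ), ‖∑ j ∈ Finset.range n, a j • u j‖ ≤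
      ‖∑ j ∈ Finset.range n, a j • e j‖ :=
    fun n a => convex_block_dominated e he (fun j => F (φ j)) (fun j => hne _) hord' bu hbu0 hbu1 n a
  have hVdom : ∀ (n : ℕ) (a : ℕ → ℝ), ‖∑ j ∈ Finset.range n, a j • v j‖ ≤
      ‖∑ j ∈ Finset.range n, a j • e j‖ :=
    fun n a => convex_block_dominated e he (fun j => F (φ j)) (fun j => hne _) hord' bv hbv0 hbv1 n a
  have hlam0 : (0:ℝ) ≤ lam := hlam.1
  have hlam1 : lam ≤ 1 := hlam.2
  have hcl' : ∀ j, |lp (φ j) - lam| ≤ ε' * (1/2)^j := fun j => hcl j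
  -- main estimate
  intro n a
  set S : X := ∑ j ∈ Finset.range n, a j • e j with hS_def
  have hSnn : 0 ≤ ‖S‖ := norm_nonneg _
  -- bound |a j|
  have haj : ∀ j, j < n → |a j| * M ≤ 2 * C * ‖S‖ := by
    intro j hj
    have hsplit : a j • e j = (∑ i ∈ Finset.range (j+1), a i • e i)
        - ∑ i ∈ Finset.range j, a i • e i := by
      rw [Finset.sum_range_succ]; abel
    have h1 : ‖∑ i ∈ Finset.range (j+1), a i • e i‖ ≤ C * ‖S‖ := hC (j+1) n hj a
    have h2 : ‖∑ i ∈ Finset.range j, a i • e i‖ ≤ C * ‖S‖ := hC j n (by omega) a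
    have : ‖a j • e j‖ ≤ 2 * C * ‖S‖ := by
      rw [hsplit]
      calc ‖_ - _‖ ≤ ‖(∑ i ∈ Finset.range (j+1), a i • e i)‖
            + ‖∑ i ∈ Finset.range j, a i • e i‖ := norm_sub_le _ _
        _ ≤ 2 * C * ‖S‖ := by linarith
    rw [norm_smul, Real.norm_eq_abs, norm_e_eq e he j] at this
    exact this
  -- decomposition of the sum
  have hdecomp : ∑ j ∈ Finset.range n, a j • z (φ j)
      = lam • (∑ j ∈ Finset.range n, a j • u j)
        - (1 - lam) • (∑ j ∈ Finset.range n, a j • v j)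
        + ∑ j ∈ Finset.range n, (lp (φ j) - lam) • (a j • u j + a j • v j) := by
    rw [Finset.smul_sum, Finset.smul_sum, ← Finset.sum_sub_distrib, ← Finset.sum_add_distrib]
    apply Finset.sum_congr rfl
    intro j _
    rw [hzdec j]
    module
  rw [hdecomp]
  have hE : ‖∑ j ∈ Finset.range n, (lp (φ j) - lam) • (a j • u j + a j • v j)‖ ≤ ε * ‖S‖ := by
    calc ‖∑ j ∈ Finset.range n, (lp (φ j) - lam) • (a j • u j + a j • v j)‖
        ≤ ∑ j ∈ Finset.range n, ‖(lp (φ j) - lam) • (a j • u j + a j • v j)‖ := norm_sum_le _ _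
      _ ≤ ∑ j ∈ Finset.range n, (ε' * (1/2)^j) * (4 * C * ‖S‖) := by
          apply Finset.sum_le_sum
          intro j hj
          rw [norm_smul, Real.norm_eq_abs]
          have hbd : ‖a j • u j + a j • v j‖ ≤ 4 * C * ‖S‖ := by
            calc ‖a j • u j + a j • v j‖ ≤ ‖a j • u j‖ + ‖a j • v j‖ := norm_add_le _ _
              _ = |a j| * ‖u j‖ + |a j| * ‖v j‖ := by
                  rw [norm_smul, norm_smul, Real.norm_eq_abs]
              _ ≤ |a j| * M + |a j| * M := by
                  have := abs_nonneg (a j)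
                  have h1 := hu_norm j
                  have h2 := hv_norm j
                  have := mul_le_mul_of_nonneg_left h1 (abs_nonneg (a j))
                  have := mul_le_mul_of_nonneg_left h2 (abs_nonneg (a j))
                  linarith
              _ = 2 * (|a j| * M) := by ring
              _ ≤ 2 * (2 * C * ‖S‖) := by
                  have := haj j (Finset.mem_range.mp hj)
                  linarith
              _ = 4 * C * ‖S‖ := by ring
          have h0 : (0:ℝ) ≤ |lp (φ j) - lam| := abs_nonneg _
          calc |lp (φ j) - lam| * ‖a j • u j + a j • v j‖
              ≤ |lp (φ j) - lam| * (4 * C * ‖S‖) := by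
                apply mul_le_mul_of_nonneg_left hbd h0
            _ ≤ (ε' * (1/2)^j) * (4 * C * ‖S‖) := by
                apply mul_le_mul_of_nonneg_right (hcl' j) (by positivity)
      _ = (∑ j ∈ Finset.range n, (1/2:ℝ)^j) * (ε' * (4 * C * ‖S‖)) := by
          rw [Finset.sum_mul]
          apply Finset.sum_congr rfl
          intro j _; ring
      _ ≤ 2 * (ε' * (4 * C * ‖S‖)) := by
          apply mul_le_mul_of_nonneg_right (sum_geometric_two_le n) (by positivity)
      _ = ε' * (8 * C) * ‖S‖ := by ring
      _ = ε * ‖S‖ := by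
          rw [hε'_def, div_mul_cancel₀]
          positivity
  calc ‖lam • (∑ j ∈ Finset.range n, a j • u j)
        - (1 - lam) • (∑ j ∈ Finset.range n, a j • v j)
        + ∑ j ∈ Finset.range n, (lp (φ j) - lam) • (a j • u j + a j • v j)‖
      ≤ ‖lam • (∑ j ∈ Finset.range n, a j • u j)
          - (1 - lam) • (∑ j ∈ Finset.range n, a j • v j)‖
        + ‖∑ j ∈ Finset.range n, (lp (φ j) - lam) • (a j • u j + a j • v j)‖ := norm_add_le _ _
    _ ≤ (‖lam • (∑ j ∈ Finset.range n, a j • u j)‖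
          + ‖(1 - lam) • (∑ j ∈ Finset.range n, a j • v j)‖) + ε * ‖S‖ := by
        have := norm_sub_le (lam • (∑ j ∈ Finset.range n, a j • u j))
          ((1 - lam) • (∑ j ∈ Finset.range n, a j • v j))
        linarith
    _ ≤ (lam * ‖S‖ + (1 - lam) * ‖S‖) + ε * ‖S‖ := by
        rw [norm_smul, norm_smul, Real.norm_eq_abs, Real.norm_eq_abs,
          abs_of_nonneg hlam0, abs_of_nonneg (by linarith : (0:ℝ) ≤ 1 - lam)]
        have h1 := mul_le_mul_of_nonneg_left (hUdom n a) hlam0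
        have h2 := mul_le_mul_of_nonneg_left (hVdom n a) (by linarith : (0:ℝ) ≤ 1 - lam)
        rw [← hS_def] at h1 h2
        linarith
    _ = (1 + ε) * ‖S‖ := by ring
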